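/- Let k ≥ 3 be an integer, let T be a simple tree with at least two vertices, and let S ⊆ V(T) be a set of vertices containing every vertex of T of valence at most k − 1. Construct a graph 𝒯(T) as follows: take k disjoint copies of T, and for each vertex v ∈ S, connect its k copies pairwise with C(k,2) edges (so the copies of v form a complete graph K_k). Then gon(𝒯(T)) = k. -/

import Mathlib

/-- A finite loopless multigraph: a finite vertex type, a finite edge type,
and an assignment of an unordered pair of distinct endpoints to each edge. -/
structure Multigraph where
  V : Type
  E : Type
  [fintypeV : Fintype V]
  [fintypeE : Fintype E]
  [decEqV : DecidableEq V]
  ends : E → Sym2 V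
  loopless : ∀ e, ¬ (ends e).IsDiag

attribute [instance] Multigraph.fintypeV Multigraph.fintypeE Multigraph.decEqV

namespace Multigraph

/-- The graph obtained by deleting the edges in `W` is connected (finite graphs are
connected iff the vertex set is nonempty and every nonempty proper vertex subset
has an edge leaving it). -/
def ConnectedWithout (G : Multigraph) (W : Set G.E) : Prop :=
  Nonempty G.V ∧
    ∀ A : Finset G.V, A.Nonempty → A ≠ Finset.univ →
      ∃ e, e ∉ W ∧ ∃ u v, G.ends e = s(u, v) ∧ u ∈ A ∧ v ∉ A

/-- `G` is connected. -/
def Connected (G : Multigraph) : Prop := G.ConnectedWithout ∅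

/-- `G` is `k`-edge-connected: deleting any set of at most `k - 1` edges
leaves a connected graph. -/
def EdgeConnected (G : Multigraph) (k : ℕ) : Prop :=
  ∀ W : Finset G.E, W.card < k → G.ConnectedWithout ↑W

/-- An edge is a bridge if deleting it disconnects the graph. -/
def IsBridge (G : Multigraph) (e : G.E) : Prop := ¬ G.ConnectedWithout {e}

/-- The graph obtained by deleting the vertices in `U` (and all incident edges)
is connected. -/
def ConnectedAvoiding (G : Multigraph) (U : Set G.V) : Prop :=
  (∃ v, v ∉ U) ∧
    ∀ A : Finset G.V, A.Nonempty → (∀ a ∈ A, a ∉ U) → (∃ w, w ∉ U ∧ w ∉ A) →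
      ∃ e u v, G.ends e = s(u, v) ∧ u ∈ A ∧ v ∉ A ∧ v ∉ U

/-- `G` is `k`-vertex-connected: deleting any set of at most `k - 1` vertices
leaves a connected graph. -/
def VertexConnected (G : Multigraph) (k : ℕ) : Prop :=
  ∀ U : Finset G.V, U.card < k → G.ConnectedAvoiding ↑U

/-- `G` is simple: no two distinct edges have the same pair of endpoints. -/
def Simple (G : Multigraph) : Prop :=
  ∀ e e' : G.E, G.ends e = G.ends e' → e = e'

/-- The genus `g(G) = |E| - |V| + 1`. -/
def genus (G : Multigraph) : ℤ :=
  (Fintype.card G.E : ℤ) - (Fintype.card G.V : ℤ) + 1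

/-- A tree is a connected graph of genus 0. -/
def IsTree (G : Multigraph) : Prop := G.Connected ∧ G.genus = 0

/-- The number of edges joining `u` and `v`. -/
noncomputable def numEdges (G : Multigraph) (u v : G.V) : ℕ :=
  Set.ncard {e : G.E | G.ends e = s(u, v)}

/-- The valence of a vertex: the number of incident edges. -/
noncomputable def valence (G : Multigraph) (v : G.V) : ℕ :=
  Set.ncard {e : G.E | v ∈ G.ends e}

/-- A divisor on `G`: an element of the free abelian group on `V(G)`. -/
abbrev Divisor (G : Multigraph) : Type := G.V → ℤ

/-- The degree of a divisor: the sum of its coefficients. -/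
def degree (G : Multigraph) (D : G.Divisor) : ℤ := ∑ v, D v

/-- A divisor is effective if all its coefficients are nonnegative. -/
def Effective (G : Multigraph) (D : G.Divisor) : Prop := ∀ v, 0 ≤ D v

/-- The Laplacian of `G` applied to an integer vector `f`. -/
noncomputable def laplacian (G : Multigraph) (f : G.V → ℤ) : G.Divisor :=
  fun v => ∑ w, (G.numEdges v w : ℤ) * (f v - f w)

/-- Linear equivalence of divisors: the difference is in the image of the Laplacian. -/
def LinEquiv (G : Multigraph) (D D' : G.Divisor) : Prop :=
  ∃ f : G.V → ℤ, D - D' = G.laplacian f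

/-- `D - F` is equivalent to an effective divisor for every effective `F` of degree `k`. -/
def RankGe (G : Multigraph) (D : G.Divisor) (k : ℤ) : Prop :=
  ∀ F : G.Divisor, G.Effective F → G.degree F = k →
    ∃ E' : G.Divisor, G.Effective E' ∧ G.LinEquiv (D - F) E'

/-- The Baker–Norine rank of a divisor. -/
noncomputable def rank (G : Multigraph) (D : G.Divisor) : ℤ :=
  sSup {r : ℤ | r = -1 ∨ (0 ≤ r ∧ G.RankGe D r)}

/-- The (divisorial) gonality of `G`: the minimum degree of an effective divisor
of rank at least 1. -/
noncomputable def gonality (G : Multigraph) : ℕ :=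
  sInf {n : ℕ | ∃ D : G.Divisor, G.Effective D ∧ G.degree D = (n : ℤ) ∧ 1 ≤ G.rank D}

end Multigraph

/-- A morphism of multigraphs: vertices map to vertices, and each edge maps either
to an edge joining the images of its endpoints (if they are distinct) or to the
common image of its endpoints. -/
structure Morphism (G G' : Multigraph) where
  vertexMap : G.V → G'.V
  edgeMap : G.E → G'.E ⊕ G'.V
  map_edge_of_eq : ∀ e u v, G.ends e = s(u, v) → vertexMap u = vertexMap v →
    edgeMap e = Sum.inr (vertexMap u)
  map_edge_of_ne : ∀ e u v, G.ends e = s(u, v) → vertexMap u ≠ vertexMap v →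
    ∃ e', edgeMap e = Sum.inl e' ∧ G'.ends e' = s(vertexMap u, vertexMap v)

namespace Morphism

variable {G G' : Multigraph}

/-- The multiplicity `m_φ(v)` of `φ` at `v` with respect to an edge `e'` of `G'`. -/
noncomputable def mult (φ : Morphism G G') (v : G.V) (e' : G'.E) : ℕ :=
  Set.ncard {e : G.E | v ∈ G.ends e ∧ φ.edgeMap e = Sum.inl e'}

/-- `φ` is harmonic if `m_φ(v)` does not depend on the chosen edge `e'`
incident to `φ(v)`. -/
def Harmonic (φ : Morphism G G') : Prop :=
  ∀ (v : G.V) (e₁ e₂ : G'.E),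
    φ.vertexMap v ∈ G'.ends e₁ → φ.vertexMap v ∈ G'.ends e₂ →
      φ.mult v e₁ = φ.mult v e₂

/-- `φ` is non-degenerate if `m_φ(v) > 0` for every vertex `v`. -/
def Nondegenerate (φ : Morphism G G') : Prop :=
  ∀ (v : G.V) (e' : G'.E), φ.vertexMap v ∈ G'.ends e' → 0 < φ.mult v e'

/-- `φ` has degree `d`: every edge of `G'` has exactly `d` preimages. -/
def HasDegree (φ : Morphism G G') (d : ℕ) : Prop :=
  Nonempty G'.E ∧ ∀ e' : G'.E, Set.ncard {e : G.E | φ.edgeMap e = Sum.inl e'} = d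

end Morphism

/-- The graph `𝒯(T)` for general `k`: `k` disjoint copies of `T`, where for each
`v ∈ S` the `k` copies of `v` are joined pairwise by `k.choose 2` edges, forming
a complete graph `K_k`. -/
noncomputable def kCopies (k : ℕ) (T : Multigraph) (S : Finset T.V) : Multigraph where
  V := Fin k × T.V
  E := (Fin k × T.E) ⊕ ({v // v ∈ S} × {p : Fin k × Fin k // p.1 < p.2})
  ends := fun e =>
    match e with
    | Sum.inl (i, e) => Sym2.map (fun v => (i, v)) (T.ends e)
    | Sum.inr (v, p) => s((p.1.1, v.1), (p.1.2, v.1))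
  loopless := by
    rintro (⟨i, e⟩ | ⟨v, p⟩) h
    all_goals dsimp only at h
    · have hT := T.loopless e
      generalize hq : T.ends e = q at h hT
      induction q using Sym2.ind with
      | _ x y =>
        rw [Sym2.map_pair_eq, Sym2.mk_isDiag_iff] at h
        exact hT (Sym2.mk_isDiag_iff.mpr (congrArg Prod.snd h))
    · rw [Sym2.mk_isDiag_iff] at h
      exact absurd (congrArg Prod.fst h) (ne_of_lt p.2)

namespace Multigraph

open Finset
open scoped Classical

variable (G : Multigraph)

lemma exists_ends (e : G.E) : ∃ u v : G.V, G.ends e = s(u, v) ∧ u ≠ v := by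
  obtain ⟨⟨x, y⟩, h⟩ := Quot.exists_rep (G.ends e)
  refine ⟨x, y, h.symm, ?_⟩
  rintro rfl
  exact G.loopless e (h ▸ Sym2.mk_isDiag_iff.mpr rfl)

lemma ncard_eq_card_filter (p : G.E → Prop) [DecidablePred p] :
    Set.ncard {e | p e} = (Finset.univ.filter p).card := by
  rw [← Set.ncard_coe_finset]; congr 1; ext e; simp

lemma numEdges_comm (u v : G.V) : G.numEdges u v = G.numEdges v u := by
  unfold numEdges; rw [Sym2.eq_swap]

lemma numEdges_self (v : G.V) : G.numEdges v v = 0 := by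
  unfold numEdges
  convert Set.ncard_empty G.E using 2
  ext e; simp only [Set.mem_setOf_eq, Set.mem_empty_iff_false, iff_false]
  intro h
  exact G.loopless e (h ▸ Sym2.mk_isDiag_iff.mpr rfl)

/-- chosen endpoints of an edge -/
noncomputable def endA (e : G.E) : G.V := (G.exists_ends e).choose
noncomputable def endB (e : G.E) : G.V := (G.exists_ends e).choose_spec.choose

lemma ends_eq (e : G.E) : G.ends e = s(G.endA e, G.endB e) :=
  (G.exists_ends e).choose_spec.choose_spec.1

lemma endA_ne_endB (e : G.E) : G.endA e ≠ G.endB e :=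
  (G.exists_ends e).choose_spec.choose_spec.2

lemma numEdges_eq_card (u v : G.V) :
    G.numEdges u v = (Finset.univ.filter (fun e => G.ends e = s(u, v))).card :=
  G.ncard_eq_card_filter _

/-- valence as a sum of numEdges -/
lemma valence_eq_sum (v : G.V) : G.valence v = ∑ w, G.numEdges v w := by
  rw [valence, ncard_eq_card_filter]
  rw [Finset.card_eq_sum_card_fiberwise
    (f := fun e => if G.endA e = v then G.endB e else G.endA e)
    (t := Finset.univ) (fun x _ => Finset.mem_univ _)]
  refine Finset.sum_congr rfl (fun w _ => ?_)
  rw [numEdges_eq_card, Finset.filter_filter]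
  apply Finset.card_bij (fun e _ => e) <;>
    simp only [Finset.mem_filter, Finset.mem_univ, true_and]
  · intro e he
    obtain ⟨hv, hw⟩ := he
    have hends := G.ends_eq e
    have hne := G.endA_ne_endB e
    rw [hends, Sym2.mem_iff] at hv
    by_cases hA : G.endA e = v
    · rw [if_pos hA] at hw; rw [hends, hA, hw]
    · have hB : G.endB e = v := by
        rcases hv with h | h
        · exact absurd h.symm hA
        · exact h.symm
      rw [if_neg hA] at hw
      rw [hends, hB, hw, Sym2.eq_swap]
  · intro e _ e' _ h; exact h
  · intro e he
    have hends := G.ends_eq e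
    have hne := G.endA_ne_endB e
    rw [hends, Sym2.eq_iff] at he
    refine ⟨e, ?_, rfl⟩
    rcases he with ⟨h1, h2⟩ | ⟨h1, h2⟩
    · constructor
      · rw [hends, ← h1]; exact Sym2.mem_mk_left _ _
      · rw [if_pos h1, h2]
    · constructor
      · rw [hends, ← h2]; exact Sym2.mem_mk_right _ _
      · have : G.endA e ≠ v := fun hv => hne (hv.trans h2.symm)
        rw [if_neg this, h1]

end Multigraph

namespace Multigraph

open Finset
open scoped Classical

variable (G : Multigraph)

/-- edges with both endpoints in `B` -/
noncomputable def inE (B : Finset G.V) : Finset G.E :=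
  Finset.univ.filter (fun e => ∀ x ∈ G.ends e, x ∈ B)

/-- the cut size of `B`, as a sum of edge multiplicities -/
noncomputable def cutS (B : Finset G.V) : ℕ := ∑ u ∈ B, ∑ v ∈ Bᶜ, G.numEdges u v

lemma inE_univ : G.inE Finset.univ = Finset.univ := by
  ext e; simp [inE]

lemma endA_mem (e : G.E) : G.endA e ∈ G.ends e := by
  rw [G.ends_eq e]; exact Sym2.mem_mk_left _ _

lemma endB_mem (e : G.E) : G.endB e ∈ G.ends e := by
  rw [G.ends_eq e]; exact Sym2.mem_mk_right _ _

lemma double_count (B : Finset G.V) :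
    ∑ u ∈ B, ∑ w ∈ B, G.numEdges u w = 2 * (G.inE B).card := by
  rw [← Finset.sum_product']
  set g : G.E × Bool → G.V × G.V :=
    fun y => if y.2 then (G.endA y.1, G.endB y.1) else (G.endB y.1, G.endA y.1) with hg
  have hmap : ∀ x ∈ ((G.inE B) ×ˢ (Finset.univ : Finset Bool)), g x ∈ B ×ˢ B := by
    rintro ⟨e, b⟩ hx
    rw [Finset.mem_product] at hx
    have he : ∀ x ∈ G.ends e, x ∈ B := by
      have h1 := hx.1; rw [inE, Finset.mem_filter] at h1; exact h1.2
    have hA : G.endA e ∈ B := he _ (G.endA_mem e)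
    have hB : G.endB e ∈ B := he _ (G.endB_mem e)
    cases b <;> simp [hg, hA, hB]
  have hcount := Finset.card_eq_sum_card_fiberwise hmap
  rw [Finset.card_product, Finset.card_univ, Fintype.card_bool, mul_comm] at hcount
  rw [hcount]
  refine Finset.sum_congr rfl fun p hp => ?_
  obtain ⟨u, w⟩ := p
  rw [Finset.mem_product] at hp
  rw [numEdges_eq_card]
  by_cases huw : u = w
  · subst huw
    rw [Finset.card_eq_zero.mpr, Finset.card_eq_zero.mpr]
    · ext x
      obtain ⟨e, b⟩ := x
      simp only [Finset.mem_filter, Finset.notMem_empty, iff_false, not_and]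
      intro _ h
      apply G.endA_ne_endB e
      cases b <;> simp only [hg, if_true, if_false, Bool.false_eq_true] at h
      · exact (congrArg Prod.snd h).trans (congrArg Prod.fst h).symm
      · exact (congrArg Prod.fst h).trans (congrArg Prod.snd h).symm
    · ext e
      simp only [Finset.mem_filter, Finset.mem_univ, true_and, Finset.notMem_empty,
        iff_false]
      intro h
      exact G.loopless e (h ▸ Sym2.mk_isDiag_iff.mpr rfl)
  · symm
    apply Finset.card_bij (fun x _ => x.1)
    · rintro ⟨e, b⟩ hx
      rw [Finset.mem_filter] at hx
      obtain ⟨-, h⟩ := hx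
      rw [Finset.mem_filter]
      refine ⟨Finset.mem_univ _, ?_⟩
      cases b <;> simp only [hg, if_true, if_false, Bool.false_eq_true] at h
      · have h1 := congrArg Prod.fst h
        have h2 := congrArg Prod.snd h
        simp only at h1 h2
        rw [G.ends_eq e, h1, h2, Sym2.eq_swap]
      · have h1 := congrArg Prod.fst h
        have h2 := congrArg Prod.snd h
        simp only at h1 h2
        rw [G.ends_eq e, h1, h2]
    · rintro ⟨e, b⟩ ha ⟨e', b'⟩ hb hfst
      simp only at hfst
      subst hfst
      rw [Finset.mem_filter] at ha hb
      obtain ⟨-, h⟩ := ha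
      obtain ⟨-, h'⟩ := hb
      suffices hbb : b = b' by rw [hbb]
      by_contra hbb
      have : (if b then (G.endA e, G.endB e) else (G.endB e, G.endA e))
          = (if b' then (G.endA e, G.endB e) else (G.endB e, G.endA e)) := by
        rw [show (if b then (G.endA e, G.endB e) else (G.endB e, G.endA e)) = (u, w) from h,
          show (if b' then (G.endA e, G.endB e) else (G.endB e, G.endA e)) = (u, w) from h']
      cases b <;> cases b' <;> simp_all <;>
        first
          | exact G.endA_ne_endB e this.1
          | exact G.endA_ne_endB e this.2
          | exact G.endA_ne_endB e this.1.symm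
          | exact G.endA_ne_endB e this.2.symm
    · intro e he
      rw [Finset.mem_filter] at he
      have hin : e ∈ G.inE B := by
        rw [inE, Finset.mem_filter]
        refine ⟨Finset.mem_univ _, fun x hx => ?_⟩
        rw [he.2, Sym2.mem_iff] at hx
        rcases hx with rfl | rfl
        exacts [hp.1, hp.2]
      have h2 := (G.ends_eq e).symm.trans he.2
      rw [Sym2.eq_iff] at h2
      rcases h2 with ⟨h1, h2⟩ | ⟨h1, h2⟩
      · refine ⟨(e, true), ?_, rfl⟩
        rw [Finset.mem_filter, Finset.mem_product]
        refine ⟨⟨hin, Finset.mem_univ _⟩, ?_⟩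
        simp [hg, h1, h2]
      · refine ⟨(e, false), ?_, rfl⟩
        rw [Finset.mem_filter, Finset.mem_product]
        refine ⟨⟨hin, Finset.mem_univ _⟩, ?_⟩
        simp [hg, h1, h2]

end Multigraph

namespace Multigraph

open Finset
open scoped Classical

variable (G : Multigraph)

lemma edge_count_of_tree (hT : G.IsTree) :
    Fintype.card G.E + 1 = Fintype.card G.V := by
  have := hT.2
  rw [genus] at this
  omega

lemma connected_cross (hT : G.Connected) (B : Finset G.V) (hB : B.Nonempty)
    (hB' : B ≠ Finset.univ) :
    ∃ u v, u ∈ B ∧ v ∉ B ∧ 1 ≤ G.numEdges u v := by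
  obtain ⟨e, -, u, v, hends, huB, hvB⟩ := hT.2 B hB hB'
  refine ⟨u, v, huB, hvB, ?_⟩
  have : e ∈ {e' : G.E | G.ends e' = s(u, v)} := hends
  have hfin : {e' : G.E | G.ends e' = s(u, v)}.Finite := Set.toFinite _
  have := Set.ncard_pos hfin |>.mpr ⟨e, this⟩
  exact this

lemma cutS_pos (hT : G.Connected) (B : Finset G.V) (hB : B.Nonempty)
    (hB' : B ≠ Finset.univ) : 1 ≤ G.cutS B := by
  obtain ⟨u, v, huB, hvB, hn⟩ := G.connected_cross hT B hB hB'
  calc 1 ≤ G.numEdges u v := hn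
    _ ≤ ∑ w ∈ Bᶜ, G.numEdges u w :=
        Finset.single_le_sum (fun _ _ => Nat.zero_le _) (Finset.mem_compl.mpr hvB)
    _ ≤ G.cutS B := Finset.single_le_sum (f := fun u => ∑ w ∈ Bᶜ, G.numEdges u w)
        (fun _ _ => Nat.zero_le _) huB

lemma cutS_compl (B : Finset G.V) : G.cutS Bᶜ = G.cutS B := by
  rw [cutS, cutS, compl_compl, Finset.sum_comm]
  exact Finset.sum_congr rfl fun u _ => Finset.sum_congr rfl fun v _ => G.numEdges_comm v u

/-- In a tree, any nonempty vertex set spans fewer edges than vertices. -/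
lemma tree_inE_card (hT : G.IsTree) (B : Finset G.V) (hB : B.Nonempty) :
    (G.inE B).card + 1 ≤ B.card := by
  have key : ∀ n (B : Finset G.V), Bᶜ.card = n → B.Nonempty →
      (G.inE B).card + 1 ≤ B.card := by
    intro n
    induction n using Nat.strong_induction_on with
    | _ n ih =>
      intro B hBc hB
      by_cases hu : B = Finset.univ
      · subst hu
        rw [G.inE_univ, Finset.card_univ, Finset.card_univ]
        rw [← G.edge_count_of_tree hT]
      · obtain ⟨e, -, u, v, hends, huB, hvB⟩ := hT.1.2 B hB hu
        set B' := insert v B with hB'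
        have hsub : G.inE B ⊆ G.inE B' := by
          intro e' he'
          rw [inE, Finset.mem_filter] at he' ⊢
          exact ⟨he'.1, fun x hx => Finset.mem_insert_of_mem (he'.2 x hx)⟩
        have hemem : e ∈ G.inE B' := by
          rw [inE, Finset.mem_filter]
          refine ⟨Finset.mem_univ _, fun x hx => ?_⟩
          rw [hends, Sym2.mem_iff] at hx
          rcases hx with rfl | rfl
          · exact Finset.mem_insert_of_mem huB
          · exact Finset.mem_insert_self _ _
        have henot : e ∉ G.inE B := by
          rw [inE, Finset.mem_filter]
          rintro ⟨-, h⟩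
          exact hvB (h v (by rw [hends]; exact Sym2.mem_mk_right _ _))
        have hcard1 : (G.inE B).card + 1 ≤ (G.inE B').card := by
          have : insert e (G.inE B) ⊆ G.inE B' := Finset.insert_subset hemem hsub
          calc (G.inE B).card + 1 = (insert e (G.inE B)).card :=
                (Finset.card_insert_of_notMem henot).symm
            _ ≤ (G.inE B').card := Finset.card_le_card this
        have hlt : B'ᶜ.card < n := by
          rw [← hBc]
          apply Finset.card_lt_card
          rw [Finset.ssubset_iff_of_subset (Finset.compl_subset_compl.mpr
            (Finset.subset_insert _ _))]
          exact ⟨v, Finset.mem_compl.mpr hvB, by simp [hB']⟩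
        have := ih _ hlt B' rfl ⟨v, Finset.mem_insert_self _ _⟩
        have hBcard : B'.card = B.card + 1 := Finset.card_insert_of_notMem hvB
        omega
  exact key _ B rfl hB

/-- every vertex of a connected graph with ≥ 2 vertices has positive valence -/
lemma valence_pos (hT : G.Connected) (hc : 2 ≤ Fintype.card G.V) (v : G.V) :
    1 ≤ G.valence v := by
  have hne : ({v} : Finset G.V) ≠ Finset.univ := by
    intro h
    have := Finset.card_univ (α := G.V)
    rw [← h, Finset.card_singleton] at this
    omega
  obtain ⟨u, w, hu, hw, hn⟩ := G.connected_cross hT {v} ⟨v, Finset.mem_singleton_self v⟩ hne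
  rw [Finset.mem_singleton] at hu
  subst hu
  rw [G.valence_eq_sum]
  calc 1 ≤ G.numEdges u w := hn
    _ ≤ ∑ x, G.numEdges u x := Finset.single_le_sum (fun _ _ => Nat.zero_le _)
        (Finset.mem_univ _)

/-- total valence formula -/
lemma sum_valence (hT : G.IsTree) :
    ∑ v, G.valence v = 2 * (Fintype.card G.V - 1) := by
  have h1 : ∑ v, G.valence v = 2 * (G.inE Finset.univ).card := by
    rw [← G.double_count]
    exact Finset.sum_congr rfl fun v _ => G.valence_eq_sum v
  rw [h1, G.inE_univ, Finset.card_univ]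
  have := G.edge_count_of_tree hT
  omega

/-- a tree with at least two vertices has two distinct vertices of valence ≤ 2 -/
lemma two_small_valence (hT : G.IsTree) (hc : 2 ≤ Fintype.card G.V) :
    ∃ u₁ u₂ : G.V, u₁ ≠ u₂ ∧ G.valence u₁ ≤ 2 ∧ G.valence u₂ ≤ 2 := by
  set Sm := Finset.univ.filter (fun v => G.valence v ≤ 2) with hSm
  have hcards : Sm.card + (Finset.univ.filter (fun v => ¬ G.valence v ≤ 2)).card
      = Fintype.card G.V := by
    rw [← Finset.card_univ, hSm]
    exact Finset.card_filter_add_card_filter_not _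
  have hbound1 : Sm.card * 1 ≤ ∑ v ∈ Sm, G.valence v :=
    Finset.card_nsmul_le_sum _ _ _ (fun v hv => G.valence_pos hT.1 hc v)
  have hbound2 : (Finset.univ.filter (fun v => ¬ G.valence v ≤ 2)).card * 3 ≤
      ∑ v ∈ Finset.univ.filter (fun v => ¬ G.valence v ≤ 2), G.valence v := by
    simpa using Finset.card_nsmul_le_sum
      (Finset.univ.filter (fun v => ¬ G.valence v ≤ 2)) G.valence 3
      (fun v hv => by rw [Finset.mem_filter] at hv; omega)
  have hsplit : ∑ v ∈ Sm, G.valence v +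
      ∑ v ∈ Finset.univ.filter (fun v => ¬ G.valence v ≤ 2), G.valence v
      = ∑ v, G.valence v :=
    Finset.sum_filter_add_sum_filter_not Finset.univ (fun v => G.valence v ≤ 2) G.valence
  have htot := G.sum_valence hT
  have h2 : 2 ≤ Sm.card := by omega
  obtain ⟨u₁, hu₁, u₂, hu₂, hne⟩ := Finset.one_lt_card.mp h2
  rw [hSm, Finset.mem_filter] at hu₁ hu₂
  exact ⟨u₁, u₂, hne, hu₁.2, hu₂.2⟩

/-- LEAFY: if the cut of a nonempty set is smaller than k (k ≥ 3) and the set is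
nonempty, then it contains a vertex of valence ≤ k-1. -/
lemma exists_small_valence (hT : G.IsTree) (k : ℕ) (hk : 3 ≤ k)
    (B : Finset G.V) (hB : B.Nonempty) (hcut : G.cutS B ≤ k - 1) :
    ∃ u ∈ B, G.valence u ≤ k - 1 := by
  by_contra hcon
  push_neg at hcon
  have hval : ∀ u ∈ B, k ≤ G.valence u := fun u hu => by
    have := hcon u hu; omega
  have h1 : B.card * k ≤ ∑ u ∈ B, G.valence u := Finset.card_nsmul_le_sum _ _ _ hval
  have h2 : ∑ u ∈ B, G.valence u = 2 * (G.inE B).card + G.cutS B := by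
    rw [Finset.sum_congr rfl (fun u (hu : u ∈ B) => G.valence_eq_sum u), cutS,
      ← G.double_count B, ← Finset.sum_add_distrib]
    exact Finset.sum_congr rfl fun u _ => (Finset.sum_add_sum_compl B _).symm
  have h3 := G.tree_inE_card hT B hB
  have hB1 : 1 ≤ B.card := Finset.card_pos.mpr hB
  have hfin : B.card * k + 2 ≤ 2 * B.card + G.cutS B := by
    rw [h2] at h1; linarith
  have hcut' : (G.cutS B : ℤ) ≤ (k : ℤ) - 1 := by
    have h := hcut
    have hk1 : 1 ≤ k := by omega
    zify [hk1] at h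
    exact h
  have hfin' : (B.card : ℤ) * k + 2 ≤ 2 * B.card + G.cutS B := by exact_mod_cast hfin
  have hB1' : (1 : ℤ) ≤ (B.card : ℤ) := by exact_mod_cast hB1
  have hk' : (3 : ℤ) ≤ (k : ℤ) := by exact_mod_cast hk
  nlinarith [mul_nonneg (sub_nonneg.mpr hB1') (by linarith : (0:ℤ) ≤ (k:ℤ) - 2)]

end Multigraph

namespace Multigraph

open Finset
open scoped Classical

variable (G : Multigraph)

def ClosedSet (e₀ : G.E) (B : Finset G.V) : Prop :=
  ∀ e, e ≠ e₀ → ∀ u v, G.ends e = s(u, v) → u ∈ B → v ∈ B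

noncomputable def closure (e₀ : G.E) (a : G.V) : Finset G.V :=
  Finset.univ.filter (fun x => ∀ B : Finset G.V, a ∈ B → G.ClosedSet e₀ B → x ∈ B)

lemma mem_closure_self (e₀ : G.E) (a : G.V) : a ∈ G.closure e₀ a := by
  rw [closure, Finset.mem_filter]
  exact ⟨Finset.mem_univ _, fun B ha _ => ha⟩

lemma closure_closed (e₀ : G.E) (a : G.V) : G.ClosedSet e₀ (G.closure e₀ a) := by
  intro e he u v hends hu
  rw [closure, Finset.mem_filter] at hu ⊢
  exact ⟨Finset.mem_univ _, fun B ha hB => hB e he u v hends (hu.2 B ha hB)⟩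

lemma closure_min (e₀ : G.E) (a : G.V) (B : Finset G.V) (ha : a ∈ B)
    (hB : G.ClosedSet e₀ B) : G.closure e₀ a ⊆ B := by
  intro x hx
  rw [closure, Finset.mem_filter] at hx
  exact hx.2 B ha hB

lemma closure_not_mem (hT : G.IsTree) (e₀ : G.E) (a b : G.V)
    (hends : G.ends e₀ = s(a, b)) (hab : a ≠ b) : b ∉ G.closure e₀ a := by
  intro hb
  set C := G.closure e₀ a with hC
  have ha : a ∈ C := G.mem_closure_self e₀ a
  have he₀ : e₀ ∈ G.inE C := by
    rw [inE, Finset.mem_filter]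
    refine ⟨Finset.mem_univ _, fun x hx => ?_⟩
    rw [hends, Sym2.mem_iff] at hx
    rcases hx with rfl | rfl
    exacts [ha, hb]
  have key : ∀ n (C₁ : Finset G.V), C₁ ⊆ C → a ∈ C₁ → (C \ C₁).card = n →
      C.card + (((G.inE C).erase e₀) ∩ G.inE C₁).card
        ≤ C₁.card + ((G.inE C).erase e₀).card := by
    intro n
    induction n using Nat.strong_induction_on with
    | _ n ih =>
      intro C₁ hsub ha1 hn
      by_cases hCC : C ⊆ C₁
      · have hCeq : C₁ = C := Finset.Subset.antisymm hsub hCC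
        rw [hCeq, Finset.inter_eq_left.mpr (Finset.erase_subset _ _)]
      · -- C₁ is a proper subset of C containing a, hence not closed
        have hnc : ¬ G.ClosedSet e₀ C₁ := by
          intro hcl
          exact hCC (G.closure_min e₀ a C₁ ha1 hcl)
        rw [ClosedSet] at hnc
        push_neg at hnc
        obtain ⟨e, hne, u, v, hev, huC1, hvC1⟩ := hnc
        have hvC : v ∈ C := G.closure_closed e₀ a e hne u v hev (hsub huC1)
        set C₂ := insert v C₁ with hC₂
        have hsub2 : C₂ ⊆ C := Finset.insert_subset hvC hsub
        have heC : e ∈ (G.inE C).erase e₀ ∩ G.inE C₂ := by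
          rw [Finset.mem_inter, Finset.mem_erase]
          refine ⟨⟨hne, ?_⟩, ?_⟩ <;>
            · rw [inE, Finset.mem_filter]
              refine ⟨Finset.mem_univ _, fun x hx => ?_⟩
              rw [hev, Sym2.mem_iff] at hx
              rcases hx with rfl | rfl
              · first
                  | exact hsub huC1
                  | exact Finset.mem_insert_of_mem huC1
              · first
                  | exact hvC
                  | exact Finset.mem_insert_self _ _
        have henot : e ∉ G.inE C₁ := by
          rw [inE, Finset.mem_filter]
          rintro ⟨-, h⟩
          exact hvC1 (h v (by rw [hev]; exact Sym2.mem_mk_right _ _))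
        have hstep : ((G.inE C).erase e₀ ∩ G.inE C₁).card + 1
            ≤ ((G.inE C).erase e₀ ∩ G.inE C₂).card := by
          have h1 : insert e ((G.inE C).erase e₀ ∩ G.inE C₁)
              ⊆ (G.inE C).erase e₀ ∩ G.inE C₂ := by
            apply Finset.insert_subset heC
            apply Finset.inter_subset_inter (le_refl _)
            intro e' he'
            rw [inE, Finset.mem_filter] at he' ⊢
            exact ⟨he'.1, fun x hx => Finset.mem_insert_of_mem (he'.2 x hx)⟩
          have h2 : e ∉ (G.inE C).erase e₀ ∩ G.inE C₁ := by
            rw [Finset.mem_inter]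
            exact fun h => henot h.2
          calc ((G.inE C).erase e₀ ∩ G.inE C₁).card + 1
              = (insert e ((G.inE C).erase e₀ ∩ G.inE C₁)).card :=
                (Finset.card_insert_of_notMem h2).symm
            _ ≤ _ := Finset.card_le_card h1
        have hvnot : v ∉ C₁ := hvC1
        have hlt : (C \ C₂).card < n := by
          rw [← hn]
          apply Finset.card_lt_card
          constructor
          · intro x hx
            rw [Finset.mem_sdiff] at hx ⊢
            exact ⟨hx.1, fun h => hx.2 (Finset.mem_insert_of_mem h)⟩
          · intro hcon
            have : v ∈ C \ C₂ := hcon (Finset.mem_sdiff.mpr ⟨hvC, hvnot⟩)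
            rw [Finset.mem_sdiff] at this
            exact this.2 (Finset.mem_insert_self _ _)
        have hih := ih _ hlt C₂ hsub2 (Finset.mem_insert_of_mem ha1) rfl
        have hc2 : C₂.card = C₁.card + 1 := Finset.card_insert_of_notMem hvnot
        omega
  have hfinal := key _ {a} (Finset.singleton_subset_iff.mpr ha) (Finset.mem_singleton_self a) rfl
  rw [Finset.card_singleton] at hfinal
  have herase : ((G.inE C).erase e₀).card = (G.inE C).card - 1 :=
    Finset.card_erase_of_mem he₀
  have hpos : 1 ≤ (G.inE C).card := Finset.card_pos.mpr ⟨e₀, he₀⟩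
  have hgrow := G.tree_inE_card hT C ⟨a, ha⟩
  omega

lemma numEdges_eq_one (hs : G.Simple) (e : G.E) (u v : G.V) (h : G.ends e = s(u, v)) :
    G.numEdges u v = 1 := by
  unfold numEdges
  rw [show {e' : G.E | G.ends e' = s(u, v)} = {e} from ?_, Set.ncard_singleton]
  ext e'
  simp only [Set.mem_setOf_eq, Set.mem_singleton_iff]
  constructor
  · intro h'; exact hs e' e (h'.trans h.symm)
  · rintro rfl; exact h

lemma laplacian_add (f g : G.V → ℤ) :
    G.laplacian (f + g) = G.laplacian f + G.laplacian g := by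
  funext x
  simp only [laplacian, Pi.add_apply]
  rw [← Finset.sum_add_distrib]
  refine Finset.sum_congr rfl fun w _ => ?_
  ring

lemma laplacian_zero : G.laplacian (fun _ => 0) = fun _ => 0 := by
  funext x
  simp [laplacian]

/-- In a simple tree, δv - δw is in the image of the Laplacian. -/
lemma tree_flow (hs : G.Simple) (hT : G.IsTree) (v w : G.V) :
    ∃ h : G.V → ℤ, G.laplacian h
      = fun x => (if x = v then (1:ℤ) else 0) - (if x = w then 1 else 0) := by
  set Q : Finset G.V := Finset.univ.filter
    (fun w => ∃ h : G.V → ℤ, G.laplacian h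
      = fun x => (if x = v then (1:ℤ) else 0) - (if x = w then 1 else 0)) with hQ
  have hvQ : v ∈ Q := by
    rw [hQ, Finset.mem_filter]
    refine ⟨Finset.mem_univ _, ⟨fun _ => 0, ?_⟩⟩
    rw [show (fun (_ : G.V) => (0:ℤ)) = _ from rfl]
    funext x
    show ∑ w, _ = _
    simp
  have hQuniv : Q = Finset.univ := by
    by_contra hne
    obtain ⟨e₀, -, α, β, hends, hαQ, hβQ⟩ := hT.1.2 Q ⟨v, hvQ⟩ hne
    have hαβ : α ≠ β := by
      rintro rfl
      exact G.loopless e₀ (hends ▸ Sym2.mk_isDiag_iff.mpr rfl)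
    set C := G.closure e₀ α with hC
    have hαC : α ∈ C := G.mem_closure_self e₀ α
    have hβC : β ∉ C := G.closure_not_mem hT e₀ α β hends hαβ
    set h₀ : G.V → ℤ := fun x => if x ∈ C then 1 else 0 with hh₀
    have hlap : G.laplacian h₀
        = fun x => (if x = α then (1:ℤ) else 0) - (if x = β then 1 else 0) := by
      funext x
      simp only [laplacian]
      have hterm : ∀ y : G.V,
          (G.numEdges x y : ℤ) * (h₀ x - h₀ y)
          = (if x = α ∧ y = β then (1:ℤ) else 0)
            + (if x = β ∧ y = α then (-1:ℤ) else 0) := by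
        intro y
        by_cases h1 : x = α ∧ y = β
        · rw [if_pos h1, if_neg (fun h => hαβ (h1.1.symm.trans h.1))]
          obtain ⟨rfl, rfl⟩ := h1
          rw [G.numEdges_eq_one hs e₀ x y hends]
          simp [hh₀, hαC, hβC]
        · by_cases h2 : x = β ∧ y = α
          · rw [if_neg h1, if_pos h2]
            obtain ⟨rfl, rfl⟩ := h2
            rw [G.numEdges_comm, G.numEdges_eq_one hs e₀ y x hends]
            simp [hh₀, hαC, hβC]
          · rw [if_neg h1, if_neg h2]
            by_cases hmem : (x ∈ C ↔ y ∈ C)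
            · have : h₀ x = h₀ y := by
                by_cases hxC : x ∈ C
                · simp [hh₀, hxC, hmem.mp hxC]
                · have hyC : y ∉ C := fun h => hxC (hmem.mpr h)
                  simp [hh₀, hxC, hyC]
              rw [this]; ring
            · -- no edge joins x and y
              have : G.numEdges x y = 0 := by
                rw [numEdges_eq_card, Finset.card_eq_zero]
                ext e
                simp only [Finset.mem_filter, Finset.mem_univ, true_and,
                  Finset.notMem_empty, iff_false]
                intro hexy
                by_cases hee : e = e₀
                · subst hee
                  have heq := hexy.symm.trans hends
                  rw [Sym2.eq_iff] at heq
                  rcases heq with ⟨ha', hb'⟩ | ⟨ha', hb'⟩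
                  · exact h1 ⟨ha', hb'⟩
                  · exact h2 ⟨ha', hb'⟩
                · have hforward := G.closure_closed e₀ α e hee x y hexy
                  have hbackward := G.closure_closed e₀ α e hee y x
                    (by rw [hexy, Sym2.eq_swap])
                  exact hmem ⟨hforward, hbackward⟩
              rw [this]; push_cast; ring
      rw [Finset.sum_congr rfl (fun y _ => hterm y), Finset.sum_add_distrib]
      have hS1 : ∑ y, (if x = α ∧ y = β then (1:ℤ) else 0)
          = if x = α then 1 else 0 := by
        by_cases hx : x = α
        · rw [if_pos hx,
            Finset.sum_congr rfl (fun y (_ : y ∈ Finset.univ) => by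
              rw [if_congr (and_iff_right hx) rfl rfl])]
          simp
        · rw [if_neg hx,
            Finset.sum_congr rfl (fun y (_ : y ∈ Finset.univ) => by
              rw [if_neg (fun h => hx h.1)])]
          simp
      have hS2 : ∑ y, (if x = β ∧ y = α then (-1:ℤ) else 0)
          = if x = β then -1 else 0 := by
        by_cases hx : x = β
        · rw [if_pos hx,
            Finset.sum_congr rfl (fun y (_ : y ∈ Finset.univ) => by
              rw [if_congr (and_iff_right hx) rfl rfl])]
          simp
        · rw [if_neg hx,
            Finset.sum_congr rfl (fun y (_ : y ∈ Finset.univ) => by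
              rw [if_neg (fun h => hx h.1)])]
          simp
      rw [hS1, hS2]
      split_ifs <;> ring
    -- now β ∈ Q, contradiction
    have : β ∈ Q := by
      rw [hQ, Finset.mem_filter] at hαQ ⊢
      obtain ⟨-, h, hh⟩ := hαQ
      refine ⟨Finset.mem_univ _, ⟨h + h₀, ?_⟩⟩
      rw [G.laplacian_add, hh, hlap]
      funext x
      simp only [Pi.add_apply]
      ring
    exact hβQ this
  have : w ∈ Q := hQuniv ▸ Finset.mem_univ w
  rw [hQ, Finset.mem_filter] at this
  exact this.2

end Multigraph

namespace Multigraph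

open Finset
open scoped Classical

variable (G : Multigraph)

lemma degree_laplacian (f : G.V → ℤ) : G.degree (G.laplacian f) = 0 := by
  rw [degree]
  simp only [laplacian]
  rw [show ∀ (g : G.V → G.V → ℤ), (∑ v, ∑ w, g v w) = ∑ v, ∑ w, g v w from fun _ => rfl]
  have : ∀ v w : G.V, (G.numEdges v w : ℤ) * (f v - f w)
      = (G.numEdges v w : ℤ) * f v - (G.numEdges w v : ℤ) * f w := by
    intro v w
    rw [G.numEdges_comm w v]
    ring
  rw [Finset.sum_congr rfl fun v _ => Finset.sum_congr rfl fun w _ => this v w]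
  rw [Finset.sum_congr rfl fun v (_ : v ∈ Finset.univ) => Finset.sum_sub_distrib _ _]
  rw [Finset.sum_sub_distrib, sub_eq_zero]
  rw [Finset.sum_comm]

lemma degree_of_linEquiv {D D' : G.Divisor} (h : G.LinEquiv D D') :
    G.degree D = G.degree D' := by
  obtain ⟨f, hf⟩ := h
  have h1 : G.degree (D - D') = 0 := by rw [hf]; exact G.degree_laplacian f
  rw [degree] at h1 ⊢
  simp only [Pi.sub_apply, Finset.sum_sub_distrib] at h1
  rw [degree]
  omega

lemma degree_nonneg_of_effective {D : G.Divisor} (h : G.Effective D) :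
    0 ≤ G.degree D := Finset.sum_nonneg fun v _ => h v

/-- an effective divisor of degree 1 is a delta divisor -/
lemma effective_degree_one {F : G.Divisor} (hF : G.Effective F) (hdeg : G.degree F = 1) :
    ∃ q : G.V, F = fun p => if p = q then 1 else 0 := by
  rw [degree] at hdeg
  have hq : ∃ q : G.V, 1 ≤ F q := by
    by_contra hcon
    push_neg at hcon
    have : ∀ q : G.V, F q = 0 := fun q => le_antisymm (by have := hcon q; omega) (hF q)
    rw [Finset.sum_congr rfl fun v _ => this v] at hdeg
    simp at hdeg
  obtain ⟨q, hq⟩ := hq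
  have hrest : ∑ v ∈ Finset.univ.erase q, F v = 1 - F q := by
    have := Finset.add_sum_erase Finset.univ F (Finset.mem_univ q)
    omega
  have hrnn : 0 ≤ ∑ v ∈ Finset.univ.erase q, F v :=
    Finset.sum_nonneg fun v _ => hF v
  have hFq : F q = 1 := by omega
  have hzero : ∀ v ∈ Finset.univ.erase q, F v = 0 := by
    rw [hFq] at hrest
    simp only [sub_self] at hrest
    intro v hv
    exact le_antisymm (by
      have := Finset.single_le_sum (f := F) (fun w _ => hF w) hv
      omega) (hF v)
  refine ⟨q, funext fun p => ?_⟩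
  by_cases hp : p = q
  · rw [if_pos hp, hp, hFq]
  · rw [if_neg hp]
    exact hzero p (Finset.mem_erase.mpr ⟨hp, Finset.mem_univ _⟩)

/-- rank at least one implies RankGe 1 -/
lemma rankGe_one_of_rank (hV : Nonempty G.V) {D : G.Divisor} (h : 1 ≤ G.rank D) :
    G.RankGe D 1 := by
  have hmem : ∃ r ∈ {r : ℤ | r = -1 ∨ (0 ≤ r ∧ G.RankGe D r)}, 1 ≤ r := by
    by_contra hcon
    push_neg at hcon
    have hle : G.rank D ≤ 0 := by
      rw [rank]
      exact csSup_le ⟨-1, Or.inl rfl⟩ (fun r hr => by have := hcon r hr; omega)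
    omega
  obtain ⟨r, hr, hr1⟩ := hmem
  have hRG : G.RankGe D r := by
    rcases hr with h1 | h2
    · omega
    · exact h2.2
  -- reduce RankGe r to RankGe 1
  intro F hF hdegF
  obtain ⟨v₀⟩ := hV
  set F' : G.Divisor := F + fun p => if p = v₀ then r - 1 else 0 with hF'
  have hF'eff : G.Effective F' := by
    intro p
    rw [hF']
    simp only [Pi.add_apply]
    by_cases hp : p = v₀
    · subst hp; rw [if_pos rfl]; have := hF p; omega
    · rw [if_neg hp]; have := hF p; omega
  have hF'deg : G.degree F' = r := by
    rw [hF', degree]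
    simp only [Pi.add_apply]
    rw [Finset.sum_add_distrib]
    rw [degree] at hdegF
    rw [hdegF, Finset.sum_ite_eq' Finset.univ v₀ (fun _ => r - 1)]
    simp
  obtain ⟨E', hE'eff, f, hf⟩ := hRG F' hF'eff hF'deg
  refine ⟨E' + fun p => if p = v₀ then r - 1 else 0, fun p => ?_, ⟨f, ?_⟩⟩
  · simp only [Pi.add_apply]
    by_cases hp : p = v₀
    · subst hp; rw [if_pos rfl]; have := hE'eff p; omega
    · rw [if_neg hp]; have := hE'eff p; omega
  · rw [← hf, hF']
    funext p
    simp only [Pi.sub_apply, Pi.add_apply]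
    ring

/-- RankGe D 1 plus boundedness gives rank ≥ 1 -/
lemma rank_ge_one (hV : Nonempty G.V) {D : G.Divisor} (h : G.RankGe D 1) :
    1 ≤ G.rank D := by
  obtain ⟨v₀⟩ := hV
  have hbdd : BddAbove {r : ℤ | r = -1 ∨ (0 ≤ r ∧ G.RankGe D r)} := by
    refine ⟨max (G.degree D) 0, fun r hr => ?_⟩
    rcases hr with h1 | ⟨h2, h3⟩
    · subst h1
      exact le_trans (by omega) (le_max_right _ _)
    · set F : G.Divisor := fun p => if p = v₀ then r else 0 with hF
      have hFeff : G.Effective F := fun p => by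
        rw [hF]; by_cases hp : p = v₀ <;> simp [hp]; omega
      have hFdeg : G.degree F = r := by
        rw [hF, degree, Finset.sum_ite_eq' Finset.univ v₀ (fun _ => r)]
        simp
      obtain ⟨E', hE'eff, hlin⟩ := h3 F hFeff hFdeg
      have hdeg := G.degree_of_linEquiv hlin
      have : G.degree (D - F) = G.degree D - r := by
        rw [degree, degree] at *
        simp only [Pi.sub_apply, Finset.sum_sub_distrib]
        rw [hF, Finset.sum_ite_eq' Finset.univ v₀ (fun _ => r)]
        simp
      have hnn := G.degree_nonneg_of_effective hE'eff
      have : r ≤ G.degree D := by omega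
      exact le_trans this (le_max_left _ _)
  rw [rank]
  exact le_csSup hbdd (Or.inr ⟨by omega, h⟩)

end Multigraph

namespace KC

open Finset
open scoped Classical

variable (k : ℕ) (T : Multigraph) (S : Finset T.V)

lemma numEdges_formula (i j : Fin k) (u w : T.V) :
    (kCopies k T S).numEdges (i, u) (j, w)
    = (if i = j then T.numEdges u w else 0)
      + (if i ≠ j ∧ u = w ∧ u ∈ S then 1 else 0) := by
  by_cases hij : i = j
  · subst hij
    rw [if_pos rfl, if_neg (by simp), add_zero]
    by_cases huw : u = w
    · subst huw
      erw [Multigraph.numEdges_self, Multigraph.numEdges_self]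
    · erw [Multigraph.numEdges_eq_card, Multigraph.numEdges_eq_card]
      symm
      apply Finset.card_bij (fun e _ => (Sum.inl (i, e) : (kCopies k T S).E))
      · intro e he
        rw [Finset.mem_filter] at he
        refine (@Finset.mem_filter _ (fun e => (kCopies k T S).ends e = s((i, u), (i, w))) (fun a => @Sym2.instDecidableEq _ (kCopies k T S).decEqV _ _) _ _).mpr ⟨Finset.mem_univ _, ?_⟩
        show Sym2.map _ (T.ends e) = _
        rw [he.2, Sym2.map_pair_eq]
      · intro e _ e' _ h
        simp only [Sum.inl.injEq, Prod.mk.injEq] at h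
        exact h.2
      · rintro (⟨i', t⟩ | ⟨⟨v, hv⟩, ⟨⟨a, b⟩, hab⟩⟩) he <;>
          replace he := (@Finset.mem_filter _ (fun e => (kCopies k T S).ends e = s((i, u), (i, w))) (fun a => @Sym2.instDecidableEq _ (kCopies k T S).decEqV _ _) _ _).mp he
        · obtain ⟨-, h⟩ := he
          have hh : Sym2.map (fun v => (i', v)) (T.ends t) = s((i, u), (i, w)) := h
          obtain ⟨x, y, hxy, -⟩ := T.exists_ends t
          rw [hxy, Sym2.map_pair_eq, Sym2.eq_iff] at hh
          rcases hh with ⟨h1, h2⟩ | ⟨h1, h2⟩ <;>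
            simp only [Prod.mk.injEq] at h1 h2
          · refine ⟨t, ?_, by rw [h1.1]⟩
            rw [Finset.mem_filter]
            exact ⟨Finset.mem_univ _, by rw [hxy, h1.2, h2.2]⟩
          · refine ⟨t, ?_, by rw [h1.1]⟩
            rw [Finset.mem_filter]
            refine ⟨Finset.mem_univ _, by rw [hxy, h1.2, h2.2, Sym2.eq_swap]⟩
        · obtain ⟨-, h⟩ := he
          have hh : s((a, v), (b, v)) = s((i, u), (i, w)) := h
          rw [Sym2.eq_iff] at hh
          exfalso
          rcases hh with ⟨h1, h2⟩ | ⟨h1, h2⟩ <;>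
            simp only [Prod.mk.injEq] at h1 h2 <;>
            exact absurd (h1.1.trans h2.1.symm) (ne_of_lt hab)
  · rw [if_neg hij, zero_add]
    by_cases hcond : u = w ∧ u ∈ S
    · rw [if_pos ⟨hij, hcond⟩]
      obtain ⟨rfl, huS⟩ := hcond
      erw [Multigraph.numEdges_eq_card, Finset.card_eq_one]
      refine ⟨Sum.inr (⟨u, huS⟩, if hlt : i < j then ⟨(i, j), hlt⟩
          else ⟨(j, i), lt_of_le_of_ne (not_lt.mp hlt) (Ne.symm hij)⟩), ?_⟩
      ext e'
      erw [Finset.mem_filter, Finset.mem_singleton]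
      constructor
      · rintro ⟨-, h⟩
        match e' with
        | Sum.inl (i', t) =>
          exfalso
          have hh : Sym2.map (fun v => (i', v)) (T.ends t) = s((i, u), (j, u)) := h
          obtain ⟨x, y, hxy, -⟩ := T.exists_ends t
          rw [hxy, Sym2.map_pair_eq, Sym2.eq_iff] at hh
          rcases hh with ⟨h1, h2⟩ | ⟨h1, h2⟩ <;>
            simp only [Prod.mk.injEq] at h1 h2 <;>
            first
              | exact hij (h1.1.symm.trans h2.1)
              | exact hij (h1.1.symm.trans h2.1).symm
        | Sum.inr (⟨v, hv⟩, ⟨⟨a, b⟩, hab⟩) =>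
          have hh : s((a, v), (b, v)) = s((i, u), (j, u)) := h
          rw [Sym2.eq_iff] at hh
          rcases hh with ⟨h1, h2⟩ | ⟨h1, h2⟩ <;>
            simp only [Prod.mk.injEq] at h1 h2
          · have hlt : i < j := by rw [← h1.1, ← h2.1]; exact hab
            refine congrArg Sum.inr (Prod.ext (Subtype.ext h1.2) ?_)
            rw [dif_pos hlt]
            exact Subtype.ext (Prod.ext h1.1 h2.1)
          · have hlt : j < i := by rw [← h1.1, ← h2.1]; exact hab
            refine congrArg Sum.inr (Prod.ext (Subtype.ext h2.2) ?_)
            rw [dif_neg (not_lt.mpr hlt.le)]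
            exact Subtype.ext (Prod.ext h1.1 h2.1)
      · rintro rfl
        refine ⟨Finset.mem_univ _, ?_⟩
        by_cases hlt : i < j
        · rw [dif_pos hlt]; rfl
        · rw [dif_neg hlt]
          show s((j, u), (i, u)) = s((i, u), (j, u))
          rw [Sym2.eq_swap]
    · erw [if_neg (fun h => hcond h.2), Multigraph.numEdges_eq_card,
        Finset.card_eq_zero]
      ext e'
      simp only [Finset.mem_filter, Finset.mem_univ, true_and, Finset.notMem_empty,
        iff_false]
      intro h
      match e' with
      | Sum.inl (i', t) =>
        have hh : Sym2.map (fun v => (i', v)) (T.ends t) = s((i, u), (j, w)) := h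
        obtain ⟨x, y, hxy, -⟩ := T.exists_ends t
        rw [hxy, Sym2.map_pair_eq, Sym2.eq_iff] at hh
        rcases hh with ⟨h1, h2⟩ | ⟨h1, h2⟩ <;>
          simp only [Prod.mk.injEq] at h1 h2 <;>
          first
            | exact hij (h1.1.symm.trans h2.1)
            | exact hij (h1.1.symm.trans h2.1).symm
      | Sum.inr (⟨v, hv⟩, ⟨⟨a, b⟩, hab⟩) =>
        have hh : s((a, v), (b, v)) = s((i, u), (j, w)) := h
        rw [Sym2.eq_iff] at hh
        rcases hh with ⟨h1, h2⟩ | ⟨h1, h2⟩ <;>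
          simp only [Prod.mk.injEq] at h1 h2
        · exact hcond ⟨h1.2.symm.trans h2.2, h1.2 ▸ hv⟩
        · exact hcond ⟨h2.2.symm.trans h1.2, h2.2 ▸ hv⟩

end KC

namespace KC

open Finset
open scoped Classical

variable (k : ℕ) (T : Multigraph) (S : Finset T.V)

lemma numEdges_same_copy (i : Fin k) (u w : T.V) :
    (kCopies k T S).numEdges (i, u) (i, w) = T.numEdges u w := by
  rw [numEdges_formula]; simp

lemma numEdges_same_vertex (i j : Fin k) (hij : i ≠ j) (v : T.V) (hv : v ∈ S) :
    (kCopies k T S).numEdges (i, v) (j, v) = 1 := by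
  rw [numEdges_formula]; simp [hij, hv]

/-- the slice of A in copy i -/
noncomputable def slice (A : Finset (Fin k × T.V)) (i : Fin k) : Finset T.V :=
  Finset.univ.filter (fun v => (i, v) ∈ A)

/-- the number of copies of v in A -/
noncomputable def copies (A : Finset (Fin k × T.V)) (v : T.V) : ℕ :=
  (Finset.univ.filter (fun i : Fin k => (i, v) ∈ A)).card

lemma copies_le (A : Finset (Fin k × T.V)) (v : T.V) : copies k T A v ≤ k := by
  rw [copies]
  calc _ ≤ (Finset.univ : Finset (Fin k)).card := Finset.card_le_card (Finset.filter_subset _ _)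
    _ = k := by simp

/-- the set of crossing pairs within copies -/
noncomputable def sE (A : Finset (Fin k × T.V)) : Finset ((Fin k × T.V) × (Fin k × T.V)) :=
  (A ×ˢ Aᶜ).filter (fun x => x.1.1 = x.2.1)

/-- the set of crossing pairs at a vertex v between copies -/
noncomputable def sD (A : Finset (Fin k × T.V)) (v : T.V) :
    Finset ((Fin k × T.V) × (Fin k × T.V)) :=
  (A ×ˢ Aᶜ).filter (fun x => x.1.2 = v ∧ x.2.2 = v)

lemma sE_sum (A : Finset (Fin k × T.V)) :
    ∑ x ∈ sE k T A, (kCopies k T S).numEdges x.1 x.2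
      = ∑ i, T.cutS (slice k T A i) := by
  have hrhs : ∑ i, T.cutS (slice k T A i)
      = ∑ z ∈ Finset.univ.sigma (fun i : Fin k => (slice k T A i) ×ˢ (slice k T A i)ᶜ),
          T.numEdges z.2.1 z.2.2 := by
    rw [Finset.sum_sigma]
    exact Finset.sum_congr rfl fun i _ => by
      rw [Multigraph.cutS, ← Finset.sum_product']
  rw [hrhs]
  apply Finset.sum_nbij'
    (i := fun x : (Fin k × T.V) × (Fin k × T.V) =>
      (⟨x.1.1, (x.1.2, x.2.2)⟩ : Σ _ : Fin k, T.V × T.V))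
    (j := fun z : Σ _ : Fin k, T.V × T.V => ((z.1, z.2.1), (z.1, z.2.2)))
  · rintro ⟨⟨i, u⟩, ⟨j, w⟩⟩ hx
    rw [sE, Finset.mem_filter, Finset.mem_product] at hx
    obtain ⟨⟨hA, hAc⟩, hcopy⟩ := hx
    simp only at hcopy hA hAc
    subst hcopy
    rw [Finset.mem_sigma, Finset.mem_product]
    refine ⟨Finset.mem_univ _, ?_, ?_⟩
    · rw [slice, Finset.mem_filter]; exact ⟨Finset.mem_univ _, hA⟩
    · rw [Finset.mem_compl, slice, Finset.mem_filter]
      simp only [Finset.mem_univ, true_and]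
      exact fun hmem => (Finset.mem_compl.mp hAc) hmem
  · rintro ⟨i, u, w⟩ hz
    rw [Finset.mem_sigma, Finset.mem_product] at hz
    obtain ⟨-, hu, hw⟩ := hz
    rw [slice, Finset.mem_filter] at hu
    rw [Finset.mem_compl, slice, Finset.mem_filter] at hw
    rw [sE, Finset.mem_filter, Finset.mem_product]
    refine ⟨⟨hu.2, Finset.mem_compl.mpr ?_⟩, rfl⟩
    exact fun hmem => hw ⟨Finset.mem_univ _, hmem⟩
  · rintro ⟨⟨i, u⟩, ⟨j, w⟩⟩ hx
    rw [sE, Finset.mem_filter, Finset.mem_product] at hx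
    obtain ⟨-, hcopy⟩ := hx
    simp only at hcopy
    subst hcopy
    rfl
  · rintro ⟨i, u, w⟩ hz
    rfl
  · rintro ⟨⟨i, u⟩, ⟨j, w⟩⟩ hx
    rw [sE, Finset.mem_filter, Finset.mem_product] at hx
    obtain ⟨-, hcopy⟩ := hx
    simp only at hcopy
    subst hcopy
    exact numEdges_same_copy k T S i u w

lemma sD_sum (A : Finset (Fin k × T.V)) (v : T.V) (hv : v ∈ S) :
    ∑ x ∈ sD k T A v, (kCopies k T S).numEdges x.1 x.2
      = copies k T A v * (k - copies k T A v) := by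
  have hone : ∀ x ∈ sD k T A v, (kCopies k T S).numEdges x.1 x.2 = 1 := by
    rintro ⟨⟨i, u⟩, ⟨j, w⟩⟩ hx
    rw [sD, Finset.mem_filter, Finset.mem_product] at hx
    obtain ⟨⟨hA, hAc⟩, hu, hw⟩ := hx
    simp only at hu hw hA hAc
    subst hu; subst hw
    have hij : i ≠ j := by
      rintro rfl
      exact (Finset.mem_compl.mp hAc) hA
    exact numEdges_same_vertex k T S i j hij _ hv
  rw [Finset.sum_congr rfl hone, Finset.sum_const, smul_eq_mul, mul_one]
  have hcompl : k - copies k T A v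
      = (Finset.univ.filter (fun j : Fin k => (j, v) ∉ A)).card := by
    have := Finset.card_filter_add_card_filter_not
      (s := (Finset.univ : Finset (Fin k))) (p := fun i => (i, v) ∈ A)
    rw [Finset.card_univ, Fintype.card_fin] at this
    rw [copies]
    omega
  rw [hcompl, copies, ← Finset.card_product]
  apply Finset.card_bij (fun x _ => (x.1.1, x.2.1))
  · rintro ⟨⟨i, u⟩, ⟨j, w⟩⟩ hx
    rw [sD, Finset.mem_filter, Finset.mem_product] at hx
    obtain ⟨⟨hA, hAc⟩, hu, hw⟩ := hx
    simp only at hu hw hA hAc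
    subst hu; subst hw
    rw [Finset.mem_product, Finset.mem_filter, Finset.mem_filter]
    exact ⟨⟨Finset.mem_univ _, hA⟩, ⟨Finset.mem_univ _, Finset.mem_compl.mp hAc⟩⟩
  · rintro ⟨⟨i, u⟩, ⟨j, w⟩⟩ hx ⟨⟨i', u'⟩, ⟨j', w'⟩⟩ hx' h
    rw [sD, Finset.mem_filter] at hx hx'
    obtain ⟨-, hu, hw⟩ := hx
    obtain ⟨-, hu', hw'⟩ := hx'
    simp only at hu hw hu' hw'
    simp only [Prod.mk.injEq] at h ⊢
    exact ⟨⟨h.1, hu.trans hu'.symm⟩, ⟨h.2, hw.trans hw'.symm⟩⟩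
  · rintro ⟨i, j⟩ hz
    rw [Finset.mem_product, Finset.mem_filter, Finset.mem_filter] at hz
    refine ⟨((i, v), (j, v)), ?_, rfl⟩
    rw [sD, Finset.mem_filter, Finset.mem_product]
    exact ⟨⟨hz.1.2, Finset.mem_compl.mpr hz.2.2⟩, rfl, rfl⟩

lemma cutS_eq_sum_pairs (A : Finset (Fin k × T.V)) :
    (kCopies k T S).cutS A
      = ∑ x ∈ A ×ˢ Aᶜ, (kCopies k T S).numEdges x.1 x.2 := by
  unfold Multigraph.cutS; exact (Finset.sum_product' ..).symm

lemma sE_subset (A : Finset (Fin k × T.V)) : sE k T A ⊆ A ×ˢ Aᶜ :=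
  Finset.filter_subset _ _

lemma sD_subset (A : Finset (Fin k × T.V)) (v : T.V) : sD k T A v ⊆ A ×ˢ Aᶜ :=
  Finset.filter_subset _ _

lemma sE_sD_disjoint (A : Finset (Fin k × T.V)) (v : T.V) :
    Disjoint (sE k T A) (sD k T A v) := by
  rw [Finset.disjoint_left]
  rintro ⟨⟨i, u⟩, ⟨j, w⟩⟩ hx hx'
  rw [sE, Finset.mem_filter, Finset.mem_product] at hx
  rw [sD, Finset.mem_filter] at hx'
  obtain ⟨⟨hA, hAc⟩, hcopy⟩ := hx
  obtain ⟨-, hu, hw⟩ := hx'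
  simp only at hcopy hu hw hA hAc
  subst hu; subst hw; subst hcopy
  exact Finset.mem_compl.mp hAc hA

lemma sD_sD_disjoint (A : Finset (Fin k × T.V)) (v v' : T.V) (hvv : v ≠ v') :
    Disjoint (sD k T A v) (sD k T A v') := by
  rw [Finset.disjoint_left]
  rintro ⟨⟨i, u⟩, ⟨j, w⟩⟩ hx hx'
  rw [sD, Finset.mem_filter] at hx hx'
  obtain ⟨-, hu, -⟩ := hx
  obtain ⟨-, hu', -⟩ := hx'
  simp only at hu hu'
  exact hvv (hu.symm.trans hu')

/-- main bound: copies part plus one vertex part -/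
lemma cut_ge_copies_add_vertex (A : Finset (Fin k × T.V)) (v : T.V) (hv : v ∈ S) :
    (∑ i, T.cutS (slice k T A i)) + copies k T A v * (k - copies k T A v)
      ≤ (kCopies k T S).cutS A := by
  rw [cutS_eq_sum_pairs, ← sE_sum k T S A, ← sD_sum k T S A v hv,
    ← Finset.sum_union (sE_sD_disjoint k T A v)]
  apply Finset.sum_le_sum_of_subset
  exact Finset.union_subset (sE_subset k T A) (sD_subset k T A v)

lemma cut_ge_two_vertices (A : Finset (Fin k × T.V)) (v v' : T.V)
    (hv : v ∈ S) (hv' : v' ∈ S) (hvv : v ≠ v') :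
    copies k T A v * (k - copies k T A v) + copies k T A v' * (k - copies k T A v')
      ≤ (kCopies k T S).cutS A := by
  rw [cutS_eq_sum_pairs, ← sD_sum k T S A v hv, ← sD_sum k T S A v' hv',
    ← Finset.sum_union (sD_sD_disjoint k T A v v' hvv)]
  apply Finset.sum_le_sum_of_subset
  exact Finset.union_subset (sD_subset k T A v) (sD_subset k T A v')

/-- Laplacian of a lifted function -/
lemma lap_lift (h : T.V → ℤ) (i : Fin k) (x : T.V) :
    (kCopies k T S).laplacian (fun p => h p.2) (i, x) = T.laplacian h x := by
  simp only [Multigraph.laplacian]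
  have hcast : (∑ q : (kCopies k T S).V,
      ((kCopies k T S).numEdges (i, x) q : ℤ) * (h x - h q.2))
      = ∑ q : Fin k × T.V, ((kCopies k T S).numEdges (i, x) q : ℤ) * (h x - h q.2) := rfl
  rw [hcast, Fintype.sum_prod_type]
  have hterm : ∀ (j : Fin k) (w : T.V),
      ((kCopies k T S).numEdges (i, x) (j, w) : ℤ) * (h x - h w)
      = (if i = j then (T.numEdges x w : ℤ) * (h x - h w) else 0)
        + (if i ≠ j ∧ x = w ∧ x ∈ S then h x - h w else 0) := by
    intro j w
    rw [numEdges_formula]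
    push_cast
    split_ifs <;> ring
  rw [Finset.sum_congr rfl fun j (_ : j ∈ Finset.univ) => Finset.sum_congr rfl
    fun w (_ : w ∈ Finset.univ) => hterm j w]
  rw [Finset.sum_congr rfl fun j (_ : j ∈ Finset.univ) => Finset.sum_add_distrib]
  rw [Finset.sum_add_distrib]
  have h2 : ∀ (j : Fin k), ∑ w, (if i ≠ j ∧ x = w ∧ x ∈ S then h x - h w else 0) = 0 := by
    intro j
    apply Finset.sum_eq_zero
    intro w _
    split_ifs with hcond
    · rw [hcond.2.1]; ring
    · rfl
  rw [Finset.sum_congr rfl fun j (_ : j ∈ Finset.univ) => h2 j, Finset.sum_const,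
    smul_zero, add_zero]
  have h1 : ∀ (j : Fin k), ∑ w, (if i = j then (T.numEdges x w : ℤ) * (h x - h w) else 0)
      = if i = j then T.laplacian h x else 0 := by
    intro j
    by_cases hj : i = j
    · simp only [if_pos hj, Multigraph.laplacian]
    · simp only [if_neg hj, Finset.sum_const_zero]
  rw [Finset.sum_congr rfl fun j (_ : j ∈ Finset.univ) => h1 j, Finset.sum_ite_eq]
  simp only [Finset.mem_univ, if_true]
  rfl

end KC

namespace KC

open Finset
open scoped Classical

variable (k : ℕ) (T : Multigraph) (S : Finset T.V)

lemma compl_nonempty_of_ne_univ {α : Type} [Fintype α] [DecidableEq α]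
    (s : Finset α) (h : s ≠ Finset.univ) : sᶜ.Nonempty := by
  by_contra hc
  rw [Finset.not_nonempty_iff_eq_empty, Finset.compl_eq_empty_iff] at hc
  exact h hc

lemma mem_slice {A : Finset (Fin k × T.V)} {i : Fin k} {v : T.V} :
    v ∈ slice k T A i ↔ (i, v) ∈ A := by simp [slice]

lemma cut_ge_copies (A : Finset (Fin k × T.V)) :
    ∑ i, T.cutS (slice k T A i) ≤ (kCopies k T S).cutS A := by
  rw [cutS_eq_sum_pairs, ← sE_sum k T S A]
  exact Finset.sum_le_sum_of_subset (sE_subset k T A)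

lemma prod_bound (c : ℕ) (h1 : 1 ≤ c) (h2 : c + 1 ≤ k) : k - 1 ≤ c * (k - c) := by
  have h3 : c ≤ k := by omega
  have h4 : 1 ≤ k := by omega
  zify [h3, h4]
  have hc' : (1 : ℤ) ≤ (c : ℤ) := by exact_mod_cast h1
  have h2' : (c : ℤ) + 1 ≤ (k : ℤ) := by exact_mod_cast h2
  nlinarith [mul_nonneg (sub_nonneg.mpr hc') (by linarith : (0:ℤ) ≤ (k:ℤ) - 1 - (c:ℤ))]

lemma conn (hk : 3 ≤ k) (hT : T.IsTree) (hcard : 2 ≤ Fintype.card T.V)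
    (hS : ∀ v : T.V, T.valence v ≤ k - 1 → v ∈ S)
    (A : Finset (Fin k × T.V)) (hA : A.Nonempty) (hA' : A ≠ Finset.univ) :
    k ≤ (kCopies k T S).cutS A := by
  by_cases hex : ∃ i, (slice k T A i).Nonempty ∧ slice k T A i ≠ Finset.univ
  · obtain ⟨i, hne, hnuniv⟩ := hex
    by_cases hbig : k ≤ T.cutS (slice k T A i)
    · exact le_trans (le_trans hbig
        (Finset.single_le_sum (f := fun j => T.cutS (slice k T A j))
          (fun _ _ => Nat.zero_le _) (Finset.mem_univ i)))
        (cut_ge_copies k T S A)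
    · push_neg at hbig
      have hcut1 : 1 ≤ T.cutS (slice k T A i) := T.cutS_pos hT.1 _ hne hnuniv
      have hcutle : T.cutS (slice k T A i) ≤ k - 1 := by omega
      obtain ⟨u, huB, huval⟩ := T.exists_small_valence hT k hk _ hne hcutle
      have huS : u ∈ S := hS u huval
      have hcomp_ne : ((slice k T A i)ᶜ).Nonempty := compl_nonempty_of_ne_univ _ hnuniv
      have hcomp_nuniv : ((slice k T A i)ᶜ) ≠ Finset.univ := by
        intro h
        obtain ⟨x, hx⟩ := hne
        exact (Finset.mem_compl.mp (h ▸ Finset.mem_univ x)) hx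
      have hcutc : T.cutS ((slice k T A i)ᶜ) ≤ k - 1 := by
        rw [T.cutS_compl]; omega
      obtain ⟨u', hu'B, hu'val⟩ := T.exists_small_valence hT k hk _ hcomp_ne hcutc
      have hu'S : u' ∈ S := hS u' hu'val
      have huin : (i, u) ∈ A := mem_slice k T |>.mp huB
      have hu'notin : (i, u') ∉ A := fun h =>
        (Finset.mem_compl.mp hu'B) (mem_slice k T |>.mpr h)
      have hcu_pos : 1 ≤ copies k T A u := by
        rw [copies]
        exact Finset.card_pos.mpr ⟨i, Finset.mem_filter.mpr ⟨Finset.mem_univ _, huin⟩⟩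
      have hsum1 : 1 ≤ ∑ j, T.cutS (slice k T A j) := le_trans hcut1
        (Finset.single_le_sum (f := fun j => T.cutS (slice k T A j))
          (fun _ _ => Nat.zero_le _) (Finset.mem_univ i))
      by_cases hcu : copies k T A u + 1 ≤ k
      · have hprod := prod_bound k (copies k T A u) hcu_pos hcu
        have hmain := cut_ge_copies_add_vertex k T S A u huS
        omega
      · have hcu_eq : copies k T A u = k := by
          have := copies_le k T A u; omega
        by_cases hcu' : 1 ≤ copies k T A u'
        · have hcu'_lt : copies k T A u' + 1 ≤ k := by
            have hsub : Finset.univ.filter (fun j : Fin k => (j, u') ∈ A)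
                ⊆ Finset.univ.erase i := by
              intro j hj
              rw [Finset.mem_filter] at hj
              rw [Finset.mem_erase]
              exact ⟨fun h => hu'notin (h ▸ hj.2), Finset.mem_univ _⟩
            have := Finset.card_le_card hsub
            rw [Finset.card_erase_of_mem (Finset.mem_univ i), Finset.card_univ,
              Fintype.card_fin] at this
            rw [copies]
            omega
          have hprod := prod_bound k (copies k T A u') hcu' hcu'_lt
          have hmain := cut_ge_copies_add_vertex k T S A u' hu'S
          omega
        · have hcu'0 : copies k T A u' = 0 := by omega
          have hall : ∀ j, 1 ≤ T.cutS (slice k T A j) := by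
            intro j
            have hju : (j, u) ∈ A := by
              have hcardeq : (Finset.univ.filter (fun i : Fin k => (i, u) ∈ A)).card
                  = Fintype.card (Fin k) := by
                rw [Fintype.card_fin]; exact hcu_eq
              have huniv := Finset.eq_univ_of_card _ hcardeq
              have : j ∈ Finset.univ.filter (fun i : Fin k => (i, u) ∈ A) := by
                rw [huniv]; exact Finset.mem_univ j
              exact (Finset.mem_filter.mp this).2
            have hju' : (j, u') ∉ A := by
              intro h
              have : j ∈ Finset.univ.filter (fun i : Fin k => (i, u') ∈ A) :=
                Finset.mem_filter.mpr ⟨Finset.mem_univ _, h⟩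
              rw [Finset.card_eq_zero.mp hcu'0] at this
              exact Finset.notMem_empty j this
            apply T.cutS_pos hT.1
            · exact ⟨u, mem_slice k T |>.mpr hju⟩
            · intro h
              exact hju' (mem_slice k T |>.mp (h ▸ Finset.mem_univ u'))
          have hsumk : k ≤ ∑ j, T.cutS (slice k T A j) := by
            have := Finset.card_nsmul_le_sum Finset.univ
              (fun j => T.cutS (slice k T A j)) 1 (fun j _ => hall j)
            rw [Finset.card_univ, Fintype.card_fin, smul_eq_mul, mul_one] at this
            exact this
          exact le_trans hsumk (cut_ge_copies k T S A)
  · push_neg at hex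
    obtain ⟨⟨i0, v0⟩, hi0⟩ := hA
    have hnotall : ∃ p : Fin k × T.V, p ∉ A := by
      by_contra h
      push_neg at h
      exact hA' (Finset.eq_univ_iff_forall.mpr h)
    obtain ⟨⟨j0, w0⟩, hj0⟩ := hnotall
    have hslice : ∀ i, slice k T A i = ∅ ∨ slice k T A i = Finset.univ := by
      intro i
      by_cases h : (slice k T A i).Nonempty
      · exact Or.inr (hex i h)
      · exact Or.inl (Finset.not_nonempty_iff_eq_empty.mp h)
    have hcopies : ∀ v : T.V, Finset.univ.filter (fun i : Fin k => (i, v) ∈ A)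
        = Finset.univ.filter (fun i : Fin k => slice k T A i = Finset.univ) := by
      intro v
      ext i
      simp only [Finset.mem_filter, Finset.mem_univ, true_and]
      constructor
      · intro h
        rcases hslice i with h0 | h1
        · exact absurd (mem_slice k T |>.mpr h) (h0 ▸ Finset.notMem_empty v)
        · exact h1
      · intro h1
        exact mem_slice k T |>.mp (h1 ▸ Finset.mem_univ v)
    obtain ⟨u₁, u₂, hne12, hval1, hval2⟩ := T.two_small_valence hT hcard
    have h1S : u₁ ∈ S := hS u₁ (by omega)
    have h2S : u₂ ∈ S := hS u₂ (by omega)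
    set m := (Finset.univ.filter (fun i : Fin k => slice k T A i = Finset.univ)).card
      with hm
    have hc1 : copies k T A u₁ = m := by rw [copies, hcopies u₁]
    have hc2 : copies k T A u₂ = m := by rw [copies, hcopies u₂]
    have hm1 : 1 ≤ m := by
      rw [hm]
      apply Finset.card_pos.mpr
      refine ⟨i0, Finset.mem_filter.mpr ⟨Finset.mem_univ _, ?_⟩⟩
      rcases hslice i0 with h0 | h1
      · exact absurd (mem_slice k T |>.mpr hi0) (h0 ▸ Finset.notMem_empty v0)
      · exact h1
    have hm2 : m + 1 ≤ k := by
      have hj0' : j0 ∉ Finset.univ.filter (fun i : Fin k => slice k T A i = Finset.univ) := by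
        rw [Finset.mem_filter]
        rintro ⟨-, h⟩
        exact hj0 (mem_slice k T |>.mp (h ▸ Finset.mem_univ w0))
      have hsub : Finset.univ.filter (fun i : Fin k => slice k T A i = Finset.univ)
          ⊆ Finset.univ.erase j0 := by
        intro j hj
        rw [Finset.mem_erase]
        exact ⟨fun h => hj0' (h ▸ hj), Finset.mem_univ _⟩
      have := Finset.card_le_card hsub
      rw [Finset.card_erase_of_mem (Finset.mem_univ j0), Finset.card_univ,
        Fintype.card_fin] at this
      omega
    have hprod1 := prod_bound k m hm1 hm2
    have hmain := cut_ge_two_vertices k T S A u₁ u₂ h1S h2S hne12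
    rw [hc1, hc2] at hmain
    omega

end KC

namespace KC

open Finset
open scoped Classical

variable (k : ℕ) (T : Multigraph) (S : Finset T.V)

/-- the divisor with one chip on every copy of v -/
noncomputable def DV (v : T.V) : (kCopies k T S).Divisor :=
  fun p => if (p : Fin k × T.V).2 = v then 1 else 0

lemma degree_DV (v : T.V) : (kCopies k T S).degree (DV k T S v) = (k : ℤ) := by
  rw [Multigraph.degree]
  have hcast : (∑ p : (kCopies k T S).V, DV k T S v p)
      = ∑ p : Fin k × T.V, (if p.2 = v then (1:ℤ) else 0) := rfl
  rw [hcast, Fintype.sum_prod_type]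
  have h1 : ∀ i : Fin k, ∑ x : T.V, (if x = v then (1:ℤ) else 0) = 1 := by
    intro i
    rw [Finset.sum_ite_eq' Finset.univ v (fun _ => (1:ℤ))]
    simp
  rw [Finset.sum_congr rfl fun i _ => h1 i, Finset.sum_const, Finset.card_univ,
    Fintype.card_fin, nsmul_eq_mul, mul_one]

lemma gonality_mem (hk : 3 ≤ k) (hsimple : T.Simple) (hT : T.IsTree)
    (hcard : 2 ≤ Fintype.card T.V) :
    ∃ D : (kCopies k T S).Divisor, (kCopies k T S).Effective D ∧
      (kCopies k T S).degree D = (k : ℤ) ∧ 1 ≤ (kCopies k T S).rank D := by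
  have hVne : Nonempty T.V := Fintype.card_pos_iff.mp (by omega)
  obtain ⟨v₀⟩ := hVne
  refine ⟨DV k T S v₀, ?_, degree_DV k T S v₀, ?_⟩
  · intro p; rw [DV]; split_ifs <;> omega
  · apply Multigraph.rank_ge_one
    · exact ⟨((⟨0, by omega⟩ : Fin k), v₀)⟩
    · intro F hF hdeg
      obtain ⟨q, rfl⟩ := (kCopies k T S).effective_degree_one hF hdeg
      obtain ⟨h, hh⟩ := T.tree_flow hsimple hT v₀ (q : Fin k × T.V).2
      refine ⟨fun p => (if (p : Fin k × T.V).2 = (q : Fin k × T.V).2 then (1:ℤ) else 0)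
        - (if p = q then 1 else 0), ?_, ⟨fun p => h (p : Fin k × T.V).2, ?_⟩⟩
      · intro p
        dsimp only
        by_cases hp : p = q
        · subst hp
          simp
        · rw [if_neg hp]
          split_ifs <;> omega
      · funext p
        simp only [Pi.sub_apply]
        have hlift := lap_lift k T S h (p : Fin k × T.V).1 (p : Fin k × T.V).2
        have hp : ((p : Fin k × T.V).1, (p : Fin k × T.V).2) = p := rfl
        rw [hp] at hlift
        rw [hlift, hh]
        simp only [DV]
        ring
  
lemma gonality_lb (hk : 3 ≤ k) (hT : T.IsTree)
    (hcard : 2 ≤ Fintype.card T.V)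
    (hS : ∀ v : T.V, T.valence v ≤ k - 1 → v ∈ S) (n : ℕ)
    (hmem : ∃ D : (kCopies k T S).Divisor, (kCopies k T S).Effective D ∧
      (kCopies k T S).degree D = (n : ℤ) ∧ 1 ≤ (kCopies k T S).rank D) :
    k ≤ n := by
  obtain ⟨D, hDeff, hDdeg, hDrank⟩ := hmem
  by_contra hlt
  push_neg at hlt
  have hVne : Nonempty T.V := Fintype.card_pos_iff.mp (by omega)
  obtain ⟨v₀⟩ := hVne
  have hRG : (kCopies k T S).RankGe D 1 :=
    (kCopies k T S).rankGe_one_of_rank ⟨((⟨0, by omega⟩ : Fin k), v₀)⟩ hDrank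
  -- pigeonhole: some copy has no chips
  have hpig : ∃ i : Fin k, ∀ v : T.V, D (i, v) = 0 := by
    by_contra hcon
    push_neg at hcon
    have hrow : ∀ i : Fin k, 1 ≤ ∑ v : T.V, D (i, v) := by
      intro i
      obtain ⟨v, hv⟩ := hcon i
      have h1 : 1 ≤ D (i, v) := by have := hDeff (i, v); omega
      exact le_trans h1 (Finset.single_le_sum (f := fun w => D (i, w))
        (fun w _ => hDeff (i, w)) (Finset.mem_univ v))
    have hksum : (k : ℤ) ≤ ∑ i : Fin k, ∑ v, D (i, v) := by
      calc (k : ℤ) = ∑ _i : Fin k, (1 : ℤ) := by simp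
      _ ≤ _ := Finset.sum_le_sum (fun i _ => hrow i)
    erw [← Fintype.sum_prod_type] at hksum
    have hdeg' : ∑ p : Fin k × T.V, D p = (n : ℤ) := by rw [← hDdeg]; rfl
    rw [hdeg'] at hksum
    have : k ≤ n := by exact_mod_cast hksum
    omega
  obtain ⟨istar, hzero⟩ := hpig
  set q : (kCopies k T S).V := ((istar, v₀) : Fin k × T.V) with hq
  have hFeff : (kCopies k T S).Effective (fun p => if p = q then 1 else 0) := by
    intro p; dsimp only; split_ifs <;> omega
  have hFdeg : (kCopies k T S).degree (fun p => if p = q then 1 else 0) = 1 := by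
    rw [Multigraph.degree, Finset.sum_ite_eq' Finset.univ q (fun _ => (1:ℤ))]
    simp
  obtain ⟨E', hE'eff, f, hf⟩ := hRG _ hFeff hFdeg
  -- hf : D - (δ q) - E' = laplacian f
  have hfp : ∀ p, D p - (if p = q then 1 else 0) - E' p
      = (kCopies k T S).laplacian f p := by
    intro p
    have := congrFun hf p
    simpa using this
  -- the set where f is maximal
  have himg : (Finset.univ.image f).Nonempty :=
    ⟨f q, Finset.mem_image_of_mem f (Finset.mem_univ q)⟩
  set M := Finset.max' (Finset.univ.image f) himg with hM
  have hfleM : ∀ p, f p ≤ M := fun p =>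
    Finset.le_max' _ _ (Finset.mem_image_of_mem f (Finset.mem_univ p))
  set A := Finset.univ.filter (fun p => f p = M) with hA
  have hAne : A.Nonempty := by
    obtain ⟨y, hy, hyeq⟩ := Finset.mem_image.mp (Finset.max'_mem _ himg)
    exact ⟨y, Finset.mem_filter.mpr ⟨Finset.mem_univ _, hyeq⟩⟩
  by_cases hAu : A = Finset.univ
  · -- f is constant, so the laplacian vanishes
    have hconst : ∀ p, f p = M := fun p => by
      have : p ∈ A := hAu ▸ Finset.mem_univ p
      exact (Finset.mem_filter.mp this).2
    have hlap0 : (kCopies k T S).laplacian f q = 0 := by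
      rw [Multigraph.laplacian]
      apply Finset.sum_eq_zero
      intro w _
      rw [hconst q, hconst w]
      ring
    have heq := hfp q
    rw [hlap0, if_pos rfl] at heq
    have hDq : D q = 0 := hzero v₀
    have hE := hE'eff q
    rw [hDq] at heq
    omega
  · have hconn := conn k T S hk hT hcard hS A hAne hAu
    -- lower bound on the laplacian sum over A
    have hlapsum : ((kCopies k T S).cutS A : ℤ)
        ≤ ∑ p ∈ A, (kCopies k T S).laplacian f p := by
      have hsplit : ∀ p : (kCopies k T S).V, (kCopies k T S).laplacian f p
          = (∑ w ∈ A, ((kCopies k T S).numEdges p w : ℤ) * (f p - f w))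
            + ∑ w ∈ Aᶜ, ((kCopies k T S).numEdges p w : ℤ) * (f p - f w) := by
        intro p
        rw [Multigraph.laplacian, ← Finset.sum_add_sum_compl A]
      rw [Finset.sum_congr rfl fun p (_ : p ∈ A) => hsplit p, Finset.sum_add_distrib]
      have hz : ∀ p ∈ A, ∑ w ∈ A, ((kCopies k T S).numEdges p w : ℤ) * (f p - f w) = 0 := by
        intro p hp
        apply Finset.sum_eq_zero
        intro w hw
        rw [(Finset.mem_filter.mp hp).2, (Finset.mem_filter.mp hw).2]
        ring
      rw [Finset.sum_congr rfl hz, Finset.sum_const_zero, zero_add]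
      rw [Multigraph.cutS]
      push_cast
      apply Finset.sum_le_sum
      intro p hp
      apply Finset.sum_le_sum
      intro w hw
      have hwM : f w + 1 ≤ M := by
        have h1 := hfleM w
        have h2 : f w ≠ M := by
          intro h
          exact (Finset.mem_compl.mp hw) (Finset.mem_filter.mpr ⟨Finset.mem_univ _, h⟩)
        omega
      have hpM : f p = M := (Finset.mem_filter.mp hp).2
      have hfpw : 1 ≤ f p - f w := by omega
      calc ((kCopies k T S).numEdges p w : ℤ)
          = ((kCopies k T S).numEdges p w : ℤ) * 1 := by ring
        _ ≤ _ := by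
            apply mul_le_mul_of_nonneg_left hfpw
            exact_mod_cast Nat.zero_le _
    -- upper bound on the laplacian sum over A
    have hupper : ∑ p ∈ A, (kCopies k T S).laplacian f p ≤ (n : ℤ) := by
      have h1 : ∑ p ∈ A, (kCopies k T S).laplacian f p ≤ ∑ p ∈ A, D p := by
        apply Finset.sum_le_sum
        intro p hp
        rw [← hfp p]
        have h2 := hE'eff p
        split_ifs <;> omega
      have h3 : ∑ p ∈ A, D p ≤ (n : ℤ) := by
        rw [← hDdeg, Multigraph.degree]
        exact Finset.sum_le_sum_of_subset_of_nonneg (Finset.subset_univ A)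
          (fun p _ _ => hDeff p)
      omega
    have hkn : (k : ℤ) ≤ (n : ℤ) := by
      have hc : (k : ℤ) ≤ ((kCopies k T S).cutS A : ℤ) := by exact_mod_cast hconn
      omega
    have : k ≤ n := by exact_mod_cast hkn
    omega

end KC


/-- Let `k ≥ 3`, let `T` be a simple tree with at least two
vertices, and let `S ⊆ V(T)` contain every vertex of valence at most `k - 1`.
Then `gon(𝒯(T)) = k`. -/
theorem stmt_17 (k : ℕ) (hk : 3 ≤ k) (T : Multigraph) (hsimple : T.Simple)
    (hT : T.IsTree) (hcard : 2 ≤ Fintype.card T.V)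
    (S : Finset T.V) (hS : ∀ v : T.V, T.valence v ≤ k - 1 → v ∈ S) :
    (kCopies k T S).gonality = k := by
  rw [Multigraph.gonality]
  apply le_antisymm
  · exact Nat.sInf_le (KC.gonality_mem k T S hk hsimple hT hcard)
  · exact le_csInf ⟨k, KC.gonality_mem k T S hk hsimple hT hcard⟩
      (fun n hn => KC.gonality_lb k T S hk hT hcard hS n hn)
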